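/- Let ν > 0 and let f ∈ H^2(𝕋) be real-valued with mean zero, satisfying ‖ν ∂_{xx} f - f^3 + mean(f^3) + f‖_{L^2(𝕋)} ≤ 1. Then ν ‖∂_x f‖_{L^2}^2 + ‖f^2 - 1/2‖_{L^2}^2 ≤ ‖f‖_{L^2} + π/2. In particular ‖f‖_{H^1} is bounded by a constant depending only on ν. -/

import Mathlib

noncomputable section
open scoped Real

/-- `L²` norm on the 2π-torus. -/
def torusL2 (f : ℝ → ℝ) : ℝ := Real.sqrt (∫ x in (-π)..π, (f x) ^ 2)

/-- `H^k` Sobolev norm on the 2π-torus. -/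
def sobNorm (k : ℕ) (f : ℝ → ℝ) : ℝ :=
  Real.sqrt (∑ j ∈ Finset.range (k + 1), ∫ x in (-π)..π, (iteratedDeriv j f x) ^ 2)

lemma negpi_le_pi : (-π : ℝ) ≤ π := by linarith [Real.pi_pos]

lemma int_sq_nonneg (u : ℝ → ℝ) : 0 ≤ ∫ x in (-π)..π, (u x) ^ 2 :=
  intervalIntegral.integral_nonneg negpi_le_pi (fun x _ => sq_nonneg _)

lemma torusL2_sq (u : ℝ → ℝ) : torusL2 u ^ 2 = ∫ x in (-π)..π, (u x) ^ 2 :=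
  Real.sq_sqrt (int_sq_nonneg u)

lemma torusL2_nonneg (u : ℝ → ℝ) : 0 ≤ torusL2 u := Real.sqrt_nonneg _

/-- Cauchy–Schwarz for interval integrals of continuous functions. -/
lemma cs_int (u v : ℝ → ℝ) (hu : Continuous u) (hv : Continuous v) :
    (∫ x in (-π)..π, u x * v x)
      ≤ Real.sqrt (∫ x in (-π)..π, (u x) ^ 2) * Real.sqrt (∫ x in (-π)..π, (v x) ^ 2) := by
  set a := ∫ x in (-π)..π, (u x) ^ 2 with ha
  set b := ∫ x in (-π)..π, u x * v x with hb
  set c := ∫ x in (-π)..π, (v x) ^ 2 with hc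
  have hquad : ∀ t : ℝ, 0 ≤ a * (t * t) + (2 * b) * t + c := by
    intro t
    have e : ∀ x : ℝ, (t * u x + v x) ^ 2
        = (t * t) * (u x) ^ 2 + (2 * t) * (u x * v x) + (v x) ^ 2 := by intro x; ring
    have h1 : IntervalIntegrable (fun x => (t * t) * (u x) ^ 2) MeasureTheory.volume (-π) π :=
      (continuous_const.mul (hu.pow 2)).intervalIntegrable _ _
    have h2 : IntervalIntegrable (fun x => (2 * t) * (u x * v x)) MeasureTheory.volume (-π) π :=
      (continuous_const.mul (hu.mul hv)).intervalIntegrable _ _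
    have h3 : IntervalIntegrable (fun x => (v x) ^ 2) MeasureTheory.volume (-π) π :=
      (hv.pow 2).intervalIntegrable _ _
    have key : (∫ x in (-π)..π, (t * u x + v x) ^ 2)
        = (t * t) * a + (2 * t) * b + c := by
      rw [show (fun x => (t * u x + v x) ^ 2)
          = fun x => ((t * t) * (u x) ^ 2 + (2 * t) * (u x * v x)) + (v x) ^ 2 from
          funext fun x => by rw [e x]]
      rw [intervalIntegral.integral_add (h1.add h2) h3, intervalIntegral.integral_add h1 h2,
        intervalIntegral.integral_const_mul, intervalIntegral.integral_const_mul]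
    have hnn : 0 ≤ ∫ x in (-π)..π, (t * u x + v x) ^ 2 :=
      intervalIntegral.integral_nonneg negpi_le_pi (fun x _ => sq_nonneg _)
    rw [key] at hnn
    nlinarith [hnn]
  have hd := discrim_le_zero hquad
  have hbb : b ^ 2 ≤ a * c := by
    simp only [discrim] at hd; nlinarith [hd]
  have hann : 0 ≤ a := int_sq_nonneg u
  have hcnn : 0 ≤ c := int_sq_nonneg v
  calc b ≤ |b| := le_abs_self b
    _ = Real.sqrt (b ^ 2) := (Real.sqrt_sq_eq_abs b).symm
    _ ≤ Real.sqrt (a * c) := Real.sqrt_le_sqrt hbb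
    _ = Real.sqrt a * Real.sqrt c := Real.sqrt_mul hann c

lemma periodic_deriv' (f : ℝ → ℝ) (hf : Differentiable ℝ f)
    (hper : Function.Periodic f (2 * π)) : deriv f π = deriv f (-π) := by
  have hfun : (fun y : ℝ => f (y + 2 * π)) = f := funext fun y => hper y
  have h1 : deriv (fun y : ℝ => f (y + 2 * π)) (-π) = deriv f (-π + 2 * π) :=
    deriv_comp_add_const f (2 * π) (-π)
  rw [hfun] at h1
  have h2 : (-π : ℝ) + 2 * π = π := by ring
  rw [h2] at h1
  exact h1.symm

/-- The main energy estimate. -/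
lemma part1 (ν : ℝ) (hν : 0 < ν) (f : ℝ → ℝ) (hf : ContDiff ℝ 2 f)
    (hper : Function.Periodic f (2 * π)) (hmean : (∫ x in (-π)..π, f x) = 0)
    (hbound : torusL2 (fun x => ν * iteratedDeriv 2 f x - (f x) ^ 3
          + (2 * π)⁻¹ * (∫ y in (-π)..π, (f y) ^ 3) + f x) ≤ 1) :
    ν * (torusL2 (deriv f)) ^ 2 + (torusL2 (fun x => (f x) ^ 2 - 1 / 2)) ^ 2
        ≤ torusL2 f + π / 2 := by
  have h2 : ContDiff ℝ ((1 : ℕ) + 1) f := by exact_mod_cast hf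
  have hdiff : Differentiable ℝ f := hf.differentiable (by norm_num)
  have hd1 : ContDiff ℝ 1 (deriv f) := (contDiff_succ_iff_deriv.mp h2).2.2
  have cf : Continuous f := hf.continuous
  have cd : Continuous (deriv f) := hd1.continuous
  have cdd : Continuous (deriv (deriv f)) := hd1.continuous_deriv le_rfl
  have hdd : Differentiable ℝ (deriv f) := hd1.differentiable (by norm_num)
  have hiter : iteratedDeriv 2 f = deriv (deriv f) := by
    rw [show (2 : ℕ) = 1 + 1 from rfl, iteratedDeriv_succ, iteratedDeriv_one]
  set c : ℝ := (2 * π)⁻¹ * (∫ y in (-π)..π, (f y) ^ 3) with hc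
  set g : ℝ → ℝ := fun x => ν * iteratedDeriv 2 f x - (f x) ^ 3 + c + f x with hg
  have cg : Continuous g := by
    rw [hg, hiter]
    exact ((((continuous_const.mul cdd).sub (cf.pow 3)).add continuous_const).add cf)
  -- integration by parts
  have ibp : (∫ x in (-π)..π, f x * deriv (deriv f) x)
      = f π * deriv f π - f (-π) * deriv f (-π) - ∫ x in (-π)..π, deriv f x * deriv f x := by
    exact intervalIntegral.integral_mul_deriv_eq_deriv_mul
      (fun x _ => (hdiff x).hasDerivAt) (fun x _ => (hdd x).hasDerivAt)
      (cd.intervalIntegrable _ _) (cdd.intervalIntegrable _ _)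
  have hfp : f π = f (-π) := by
    have := hper (-π); rw [show (-π : ℝ) + 2 * π = π by ring] at this; exact this
  have hdp : deriv f π = deriv f (-π) := periodic_deriv' f hdiff hper
  have ibp2 : (∫ x in (-π)..π, f x * deriv (deriv f) x)
      = - ∫ x in (-π)..π, (deriv f x) ^ 2 := by
    rw [ibp, hfp, hdp]
    simp only [sq]
    ring
  -- expand ∫ f * g
  have i1 : IntervalIntegrable (fun x => ν * (f x * deriv (deriv f) x))
      MeasureTheory.volume (-π) π := (continuous_const.mul (cf.mul cdd)).intervalIntegrable _ _
  have i2 : IntervalIntegrable (fun x => (f x) ^ 4) MeasureTheory.volume (-π) π :=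
    (cf.pow 4).intervalIntegrable _ _
  have i3 : IntervalIntegrable (fun x => c * f x) MeasureTheory.volume (-π) π :=
    (continuous_const.mul cf).intervalIntegrable _ _
  have i4 : IntervalIntegrable (fun x => (f x) ^ 2) MeasureTheory.volume (-π) π :=
    (cf.pow 2).intervalIntegrable _ _
  have expand : (∫ x in (-π)..π, f x * g x)
      = ν * (∫ x in (-π)..π, f x * deriv (deriv f) x) - (∫ x in (-π)..π, (f x) ^ 4)
        + c * (∫ x in (-π)..π, f x) + (∫ x in (-π)..π, (f x) ^ 2) := by
    rw [show (fun x => f x * g x)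
        = fun x => (((ν * (f x * deriv (deriv f) x)) - (f x) ^ 4) + c * f x) + (f x) ^ 2 from
        funext fun x => by rw [hg, hiter]; ring]
    rw [intervalIntegral.integral_add (((i1.sub i2).add i3)) i4,
      intervalIntegral.integral_add (i1.sub i2) i3,
      intervalIntegral.integral_sub i1 i2,
      intervalIntegral.integral_const_mul ν, intervalIntegral.integral_const_mul c]
  have expand2 : (∫ x in (-π)..π, f x * g x)
      = - (ν * (∫ x in (-π)..π, (deriv f x) ^ 2)) - (∫ x in (-π)..π, (f x) ^ 4)
        + (∫ x in (-π)..π, (f x) ^ 2) := by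
    rw [expand, ibp2, hmean]; ring
  -- Cauchy-Schwarz lower bound on ∫ f g
  have hcs : (∫ x in (-π)..π, (- f x) * g x) ≤ torusL2 f * torusL2 g :=
    (cs_int (fun x => - f x) g cf.neg cg).trans_eq (by
      have e : (fun x : ℝ => (- f x) ^ 2) = fun x => (f x) ^ 2 := funext fun x => by ring
      rw [torusL2, torusL2, e])
  have hneg : (∫ x in (-π)..π, (- f x) * g x) = - ∫ x in (-π)..π, f x * g x := by
    rw [show (fun x => (- f x) * g x) = fun x => -(f x * g x) from funext fun x => by ring]
    exact intervalIntegral.integral_neg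
  have hprod : torusL2 f * torusL2 g ≤ torusL2 f :=
    mul_le_of_le_one_right (torusL2_nonneg f) hbound
  have hlow : - (∫ x in (-π)..π, f x * g x) ≤ torusL2 f := by
    rw [← hneg]; exact hcs.trans hprod
  -- identity for ∫ (f²-1/2)²
  have ident : (∫ x in (-π)..π, ((f x) ^ 2 - 1 / 2) ^ 2)
      = (∫ x in (-π)..π, (f x) ^ 4) - (∫ x in (-π)..π, (f x) ^ 2) + π / 2 := by
    rw [show (fun x => ((f x) ^ 2 - 1 / 2) ^ 2)
        = fun x => ((f x) ^ 4 - (f x) ^ 2) + (1 / 4 : ℝ) from funext fun x => by ring]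
    rw [intervalIntegral.integral_add (i2.sub i4) (intervalIntegrable_const),
      intervalIntegral.integral_sub i2 i4, intervalIntegral.integral_const]
    simp only [smul_eq_mul]
    ring
  have e1 : (torusL2 (deriv f)) ^ 2 = ∫ x in (-π)..π, (deriv f x) ^ 2 := torusL2_sq _
  have e2 : (torusL2 (fun x => (f x) ^ 2 - 1 / 2)) ^ 2
      = ∫ x in (-π)..π, ((f x) ^ 2 - 1 / 2) ^ 2 := torusL2_sq _
  rw [e1, e2, ident]
  have := hlow
  rw [expand2] at this
  linarith

theorem almost_steady_energy_bound (ν : ℝ) (hν : 0 < ν) :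
    (∀ f : ℝ → ℝ, ContDiff ℝ 2 f → Function.Periodic f (2 * π) →
      (∫ x in (-π)..π, f x) = 0 →
      torusL2 (fun x => ν * iteratedDeriv 2 f x - (f x) ^ 3
          + (2 * π)⁻¹ * (∫ y in (-π)..π, (f y) ^ 3) + f x) ≤ 1 →
      ν * (torusL2 (deriv f)) ^ 2 + (torusL2 (fun x => (f x) ^ 2 - 1 / 2)) ^ 2
        ≤ torusL2 f + π / 2) ∧
    ∃ C : ℝ, 0 < C ∧ ∀ f : ℝ → ℝ, ContDiff ℝ 2 f → Function.Periodic f (2 * π) →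
      (∫ x in (-π)..π, f x) = 0 →
      torusL2 (fun x => ν * iteratedDeriv 2 f x - (f x) ^ 3
          + (2 * π)⁻¹ * (∫ y in (-π)..π, (f y) ^ 3) + f x) ≤ 1 →
      sobNorm 1 f ≤ C := by
  constructor
  · exact fun f hf hper hmean hbound => part1 ν hν f hf hper hmean hbound
  · refine ⟨Real.sqrt (13 + 9 / ν), Real.sqrt_pos.mpr (by positivity), ?_⟩
    intro f hf hper hmean hbound
    have hmain := part1 ν hν f hf hper hmean hbound
    have cf : Continuous f := hf.continuous
    set N : ℝ := ∫ x in (-π)..π, (f x) ^ 2 with hN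
    have hNnn : 0 ≤ N := int_sq_nonneg f
    have i2 : IntervalIntegrable (fun x => (f x) ^ 4) MeasureTheory.volume (-π) π :=
      (cf.pow 4).intervalIntegrable _ _
    have i4 : IntervalIntegrable (fun x => (f x) ^ 2) MeasureTheory.volume (-π) π :=
      (cf.pow 2).intervalIntegrable _ _
    have ident : (∫ x in (-π)..π, ((f x) ^ 2 - 1 / 2) ^ 2)
        = (∫ x in (-π)..π, (f x) ^ 4) - N + π / 2 := by
      rw [show (fun x => ((f x) ^ 2 - 1 / 2) ^ 2)
          = fun x => ((f x) ^ 4 - (f x) ^ 2) + (1 / 4 : ℝ) from funext fun x => by ring]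
      rw [intervalIntegral.integral_add (i2.sub i4) (intervalIntegrable_const),
        intervalIntegral.integral_sub i2 i4, intervalIntegral.integral_const]
      simp only [smul_eq_mul]
      ring
    have hTf : torusL2 f = Real.sqrt N := rfl
    have hsqN : Real.sqrt N ≤ (N + 1) / 2 := by
      nlinarith [Real.sq_sqrt hNnn, sq_nonneg (Real.sqrt N - 1), Real.sqrt_nonneg N]
    -- drop the ν-term
    have hDnn : 0 ≤ ν * (torusL2 (deriv f)) ^ 2 :=
      mul_nonneg hν.le (sq_nonneg _)
    have hI : (torusL2 (fun x => (f x) ^ 2 - 1 / 2)) ^ 2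
        = (∫ x in (-π)..π, (f x) ^ 4) - N + π / 2 := (torusL2_sq _).trans ident
    have hf4 : (∫ x in (-π)..π, (f x) ^ 4) ≤ N + Real.sqrt N := by
      have := hmain
      rw [hI, hTf] at this
      linarith
    -- Cauchy-Schwarz: N ≤ sqrt(∫f⁴) * sqrt(2π)
    have hcs : N ≤ Real.sqrt (∫ x in (-π)..π, (f x) ^ 4)
        * Real.sqrt (∫ x in (-π)..π, (1 : ℝ) ^ 2) := by
      have h := cs_int (fun x => (f x) ^ 2) (fun _ => (1 : ℝ)) (cf.pow 2) continuous_const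
      simp only [mul_one] at h
      calc N = ∫ x in (-π)..π, (f x) ^ 2 := rfl
        _ ≤ Real.sqrt (∫ x in (-π)..π, ((f x) ^ 2) ^ 2)
            * Real.sqrt (∫ x in (-π)..π, (1 : ℝ) ^ 2) := h
        _ = _ := by norm_num [← pow_mul]
    have hconst : (∫ x in (-π)..π, (1 : ℝ) ^ 2) = 2 * π := by
      simp [intervalIntegral.integral_const]; ring
    have hNsq : N ^ 2 ≤ (∫ x in (-π)..π, (f x) ^ 4) * (2 * π) := by
      have h4nn : 0 ≤ ∫ x in (-π)..π, (f x) ^ 4 :=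
        intervalIntegral.integral_nonneg negpi_le_pi (fun x _ => by positivity)
      have h2pnn : (0:ℝ) ≤ 2 * π := by positivity
      have := hcs
      rw [hconst] at this
      calc N ^ 2 ≤ (Real.sqrt (∫ x in (-π)..π, (f x) ^ 4) * Real.sqrt (2 * π)) ^ 2 := by
            apply sq_le_sq' _ this
            nlinarith [Real.sqrt_nonneg (∫ x in (-π)..π, (f x) ^ 4), Real.sqrt_nonneg (2*π)]
        _ = (∫ x in (-π)..π, (f x) ^ 4) * (2 * π) := by
            rw [mul_pow, Real.sq_sqrt h4nn, Real.sq_sqrt h2pnn]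
    have hpi4 : π ≤ 4 := Real.pi_le_four
    have hpi0 : 0 < π := Real.pi_pos
    -- N² ≤ 2π(N + √N) ≤ 2π(N + (N+1)/2) = 3πN + π ≤ 12N + 4
    have hNq : N ^ 2 ≤ 12 * N + 4 := by nlinarith [hf4, hsqN]
    have hN13 : N ≤ 13 := by nlinarith [sq_nonneg (N - 13)]
    -- derivative bound
    have hDer : (torusL2 (deriv f)) ^ 2 ≤ 9 / ν := by
      have h1 : ν * (torusL2 (deriv f)) ^ 2 ≤ Real.sqrt N + π / 2 := by
        have hq : 0 ≤ (torusL2 (fun x => (f x) ^ 2 - 1 / 2)) ^ 2 := sq_nonneg _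
        rw [hTf] at hmain; linarith
      have h2 : Real.sqrt N + π / 2 ≤ 9 := by
        have : Real.sqrt N ≤ 7 := by nlinarith [hsqN]
        linarith
      rw [le_div_iff₀ hν, mul_comm]
      exact h1.trans h2
    have hsob : sobNorm 1 f
        = Real.sqrt ((∫ x in (-π)..π, (f x) ^ 2) + ∫ x in (-π)..π, (deriv f x) ^ 2) := by
      simp [sobNorm, Finset.sum_range_succ, iteratedDeriv_one, iteratedDeriv_zero]
    rw [hsob]
    apply Real.sqrt_le_sqrt
    have e1 : (torusL2 (deriv f)) ^ 2 = ∫ x in (-π)..π, (deriv f x) ^ 2 := torusL2_sq _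
    rw [← e1, ← hN]
    linarith [hDer, hN13]
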